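/- Let M →σ P ←τ N be a quasi-coherent representation. Then every short exact sequence of representations 0 → (M →σ P ←τ N) → (A → C ← B) → O(0) → 0 (componentwise short exact, with all squares commuting and the middle representation quasi-coherent) is isomorphic, as an extension, to a standard extension E(y,z) for some elements y, z ∈ P: here E(y,z) is the quasi-coherent representation M ⊕ R → P ⊕ L ← N ⊕ R' whose left map sends (m, p) to (σ(m) + p·y, p) (the product p·y taken in the L-module P via R → L) and whose right map sends (n, q) to (τ(n) + q·z, q) (the product q·z taken in the L-module P via R' → L), equipped with the evident inclusion of (M →σ P ←τ N) and projection onto O(0). -/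

import Mathlib

/-!
Setup (context of the paper): a quasi-coherent sheaf on `P¹(k)` is identified with a
quasi-coherent representation `M →σ P ←τ N` where `M` is a module over `R = k[X]`,
`N` is a module over `R' = k[Y]` (with `Y` playing the role of `X⁻¹`), `P` is a module
over the Laurent polynomial ring `L = k[X,X⁻¹]`, `σ` exhibits `P` as the localization of
`M` at the powers of `X` and `τ` exhibits `P` as the localization of `N` at the powers
of `Y`.  For `n ∈ ℤ`, the sheaf `O(n)` is the representation `R → L ← R'` whose left map
sends `p` to `p·Xⁿ` and whose right map is the canonical localization map.
-/

noncomputable section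

open Polynomial LaurentPolynomial

/-- `R' = k[Y]`, a second copy of the polynomial ring over `k`. -/
def RPrime (k : Type*) [Field k] : Type _ := Polynomial k

instance (k : Type*) [Field k] : CommRing (RPrime k) :=
  inferInstanceAs (CommRing (Polynomial k))

/-- The variable `Y` of `R' = k[Y]`. -/
def Yvar (k : Type*) [Field k] : RPrime k := (Polynomial.X : Polynomial k)

/-- `L = k[X,X⁻¹]` is an `R'`-algebra via `Y ↦ X⁻¹`. -/
instance (k : Type*) [Field k] : Algebra (RPrime k) (LaurentPolynomial k) :=
  RingHom.toAlgebra
    (show Polynomial k →+* LaurentPolynomial k from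
      (Polynomial.aeval (LaurentPolynomial.T (-1) : LaurentPolynomial k)).toRingHom)

/-- Auxiliary splitting lemma: a short exact sequence of `R`-modules with quotient `R`
splits, with an explicit description of the splitting. -/
lemma split_aux {R : Type*} [CommRing R] {A M : Type*}
    [AddCommGroup A] [Module R A] [AddCommGroup M] [Module R M]
    (i : M →ₗ[R] A) (p : A →ₗ[R] R) (hi : Function.Injective i)
    (hex : LinearMap.range i = LinearMap.ker p) (a₀ : A) (ha₀ : p a₀ = 1) :
    ∃ e : A ≃ₗ[R] M × R,
      (∀ m, e (i m) = (m, 0)) ∧ (∀ a, (e a).2 = p a) ∧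
      (∀ a, i (e a).1 = a - p a • a₀) := by
  have hpi : ∀ m, p (i m) = 0 := by
    intro m
    have : i m ∈ LinearMap.ker p := hex ▸ LinearMap.mem_range_self i m
    exact this
  set q : A →ₗ[R] A := LinearMap.id - (LinearMap.toSpanSingleton R A a₀).comp p with hq
  have hqmem : ∀ a, q a ∈ LinearMap.range i := by
    intro a
    rw [hex, LinearMap.mem_ker]
    simp [hq, LinearMap.toSpanSingleton_apply, ha₀, smul_eq_mul]
  set s : A →ₗ[R] M :=
    (LinearEquiv.ofInjective i hi).symm.toLinearMap.comp
      (LinearMap.codRestrict (LinearMap.range i) q hqmem) with hs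
  have his : ∀ a, i (s a) = a - p a • a₀ := by
    intro a
    have : i ((LinearEquiv.ofInjective i hi).symm ⟨q a, hqmem a⟩) =
        ((LinearEquiv.ofInjective i hi) ((LinearEquiv.ofInjective i hi).symm ⟨q a, hqmem a⟩) :
          A) := rfl
    simp only [hs, LinearMap.comp_apply, LinearEquiv.coe_coe]
    rw [show (LinearMap.codRestrict (LinearMap.range i) q hqmem a) = ⟨q a, hqmem a⟩ from rfl,
      this, LinearEquiv.apply_symm_apply]
    simp [hq, LinearMap.toSpanSingleton_apply]
  refine ⟨LinearEquiv.ofLinear (LinearMap.prod s p)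
      (i.coprod (LinearMap.toSpanSingleton R A a₀)) ?_ ?_, ?_, ?_, ?_⟩
  · refine LinearMap.ext fun x => ?_
    simp only [LinearMap.comp_apply, LinearMap.prod_apply, LinearMap.coprod_apply,
      LinearMap.toSpanSingleton_apply, Function.prod, LinearMap.id_coe, id_eq]
    refine Prod.ext ?_ ?_
    · apply hi
      rw [his]
      simp [hpi, ha₀, smul_eq_mul]
    · simp [hpi, ha₀, smul_eq_mul]
  · ext a
    simp only [LinearMap.comp_apply, LinearMap.prod_apply, LinearMap.coprod_apply,
      LinearMap.toSpanSingleton_apply, Function.prod, LinearMap.id_coe, id_eq, his]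
    abel
  · intro m
    have h1 : s (i m) = m := by
      apply hi; rw [his]; simp [hpi]
    simp [LinearEquiv.ofLinear_apply, LinearMap.prod_apply, h1, hpi, Function.prod, Prod.ext_iff]
  · intro a; rfl
  · intro a; exact his a

/-- every extension `0 → (M →σ P ←τ N) → (A → C ← B) → O(0) → 0` of
quasi-coherent representations is isomorphic, as an extension, to a standard extension
`E(y,z) : M ⊕ R → P ⊕ L ← N ⊕ R'` (left map `(m,p) ↦ (σ(m) + p·y, p)`, right map
`(n,q) ↦ (τ(n) + q·z, q)`) for some `y, z ∈ P`. -/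
theorem stmt9 {k : Type*} [Field k]
    {M N P : Type*} [AddCommGroup M] [Module (Polynomial k) M]
    [AddCommGroup N] [Module (RPrime k) N]
    [AddCommGroup P] [Module (LaurentPolynomial k) P]
    [Module (Polynomial k) P] [IsScalarTower (Polynomial k) (LaurentPolynomial k) P]
    [Module (RPrime k) P] [IsScalarTower (RPrime k) (LaurentPolynomial k) P]
    (σ : M →ₗ[Polynomial k] P) (τ : N →ₗ[RPrime k] P)
    [IsLocalizedModule (Submonoid.powers (Polynomial.X : Polynomial k)) σ]
    [IsLocalizedModule (Submonoid.powers (Yvar k)) τ]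
    -- the middle quasi-coherent representation `A → C ← B`
    {A C B : Type*} [AddCommGroup A] [Module (Polynomial k) A]
    [AddCommGroup B] [Module (RPrime k) B]
    [AddCommGroup C] [Module (LaurentPolynomial k) C]
    [Module (Polynomial k) C] [IsScalarTower (Polynomial k) (LaurentPolynomial k) C]
    [Module (RPrime k) C] [IsScalarTower (RPrime k) (LaurentPolynomial k) C]
    (f : A →ₗ[Polynomial k] C) (g : B →ₗ[RPrime k] C)
    [IsLocalizedModule (Submonoid.powers (Polynomial.X : Polynomial k)) f]
    [IsLocalizedModule (Submonoid.powers (Yvar k)) g]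
    -- the inclusion morphism of representations
    (iM : M →ₗ[Polynomial k] A) (iP : P →ₗ[LaurentPolynomial k] C) (iN : N →ₗ[RPrime k] B)
    (hi₁ : ∀ m, iP (σ m) = f (iM m)) (hi₂ : ∀ x, iP (τ x) = g (iN x))
    -- the projection morphism of representations onto `O(0)`
    (pA : A →ₗ[Polynomial k] Polynomial k)
    (pC : C →ₗ[LaurentPolynomial k] LaurentPolynomial k)
    (pB : B →ₗ[RPrime k] RPrime k)
    (hp₁ : ∀ a, pC (f a) = algebraMap (Polynomial k) (LaurentPolynomial k) (pA a))
    (hp₂ : ∀ b, pC (g b) = algebraMap (RPrime k) (LaurentPolynomial k) (pB b))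
    -- componentwise short exactness
    (hiM : Function.Injective iM) (hiP : Function.Injective iP) (hiN : Function.Injective iN)
    (hpA : Function.Surjective pA) (hpC : Function.Surjective pC)
    (hpB : Function.Surjective pB)
    (hexA : LinearMap.range iM = LinearMap.ker pA)
    (hexC : LinearMap.range iP = LinearMap.ker pC)
    (hexB : LinearMap.range iN = LinearMap.ker pB) :
    ∃ (y z : P) (φA : A ≃ₗ[Polynomial k] M × Polynomial k)
      (φC : C ≃ₗ[LaurentPolynomial k] P × LaurentPolynomial k)
      (φB : B ≃ₗ[RPrime k] N × RPrime k),
      -- `φ` identifies the structure maps of the middle term with those of `E(y,z)`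
      (∀ a, φC (f a) =
        (σ (φA a).1 + (φA a).2 • y,
          algebraMap (Polynomial k) (LaurentPolynomial k) (φA a).2)) ∧
      (∀ b, φC (g b) =
        (τ (φB b).1 + (φB b).2 • z,
          algebraMap (RPrime k) (LaurentPolynomial k) (φB b).2)) ∧
      -- `φ` is compatible with the inclusion of `(M →σ P ←τ N)` ...
      (∀ m, φA (iM m) = (m, 0)) ∧ (∀ p, φC (iP p) = (p, 0)) ∧ (∀ x, φB (iN x) = (x, 0)) ∧
      -- ... and with the projection onto `O(0)`
      (∀ a, pA a = (φA a).2) ∧ (∀ c, pC c = (φC c).2) ∧ (∀ b, pB b = (φB b).2) := by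
  obtain ⟨a₀, ha₀⟩ := hpA 1
  obtain ⟨b₀, hb₀⟩ := hpB 1
  have hc₀ : pC (f a₀) = 1 := by rw [hp₁, ha₀, map_one]
  have hgb₀ : pC (g b₀) = 1 := by rw [hp₂, hb₀, map_one]
  obtain ⟨eA, heA₁, heA₂, heA₃⟩ := split_aux iM pA hiM hexA a₀ ha₀
  obtain ⟨eC, heC₁, heC₂, heC₃⟩ := split_aux iP pC hiP hexC (f a₀) hc₀
  obtain ⟨eB, heB₁, heB₂, heB₃⟩ := split_aux iN pB hiN hexB b₀ hb₀
  have hw : f a₀ - g b₀ ∈ LinearMap.range iP := by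
    rw [hexC, LinearMap.mem_ker, map_sub, hc₀, hgb₀, sub_self]
  obtain ⟨w, hw⟩ := hw
  refine ⟨0, -w, eA, eC, eB, ?_, ?_, heA₁, ?_, heB₁, fun a => (heA₂ a).symm, fun c => (heC₂ c).symm,
    fun b => (heB₂ b).symm⟩
  · intro a
    have h2 : (eC (f a)).2 = algebraMap (Polynomial k) (LaurentPolynomial k) (eA a).2 := by
      rw [heC₂, hp₁, heA₂]
    refine Prod.ext ?_ h2
    apply hiP
    rw [heC₃]
    simp only [smul_zero, add_zero]
    rw [hi₁, heA₃, map_sub, map_smul, hp₁, algebraMap_smul]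
  · intro b
    have h2 : (eC (g b)).2 = algebraMap (RPrime k) (LaurentPolynomial k) (eB b).2 := by
      rw [heC₂, hp₂, heB₂]
    refine Prod.ext ?_ h2
    apply hiP
    rw [heC₃]
    have : iP ((eB b).2 • (-w)) = (eB b).2 • (-(f a₀ - g b₀)) := by
      rw [← algebraMap_smul (LaurentPolynomial k), map_smul, map_neg, hw,
        algebraMap_smul]
    rw [map_add, this, hi₂, heB₃, map_sub, map_smul, hp₂, algebraMap_smul, heB₂,
      smul_neg, smul_sub]
    abel
  · intro p
    have := heC₁ p
    exact this
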